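/- Let U ⊆ ℂ be open, let f : ℂ → ℂ be holomorphic (complex differentiable) on U, and let K be a compact subset of U. Then the following are equivalent: (i) there is no open set V with K ⊆ V ⊆ U on which f is injective; (ii) either f has a critical point on K (i.e. there exists z ∈ K with f'(z) = 0), or the restriction of f to K is not injective (or both). -/

import Mathlib

open Complex Metric Set Filter
open scoped Topology
lemma not_injOn_of_deriv_eq_zero {f : ℂ → ℂ} {z₀ : ℂ} {V : Set ℂ}
    (hf : AnalyticAt ℂ f z₀) (hd : deriv f z₀ = 0) (hV : IsOpen V) (hz₀ : z₀ ∈ V) :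
    ¬ Set.InjOn f V := by
  intro hinj
  set g : ℂ → ℂ := fun z => f z - f z₀ with hg_def
  have hg : AnalyticAt ℂ g z₀ := hf.sub analyticAt_const
  rcases eq_or_ne (analyticOrderAt g z₀) ⊤ with hord | hord
  · -- locally constant case
    have hev : ∀ᶠ z in 𝓝 z₀, g z = 0 := analyticOrderAt_eq_top.mp hord
    have hevV : ∀ᶠ z in 𝓝 z₀, g z = 0 ∧ z ∈ V := hev.and (hV.eventually_mem hz₀)
    have hev' : ∀ᶠ z in 𝓝[≠] z₀, (g z = 0 ∧ z ∈ V) ∧ z ∈ ({z₀}ᶜ : Set ℂ) :=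
      (hevV.filter_mono nhdsWithin_le_nhds).and eventually_mem_nhdsWithin
    obtain ⟨w, ⟨hw0, hwV⟩, hwne⟩ := hev'.exists
    have : f w = f z₀ := by simpa [hg_def, sub_eq_zero] using hw0
    exact hwne (hinj hwV hz₀ this)
  · -- finite order case
    lift analyticOrderAt g z₀ to ℕ using hord with n hn
    obtain ⟨h, hh, hc, hfg⟩ := (hg.analyticOrderAt_eq_natCast (n := n)).mp hn.symm
    -- n ≥ 2
    have hn0 : n ≠ 0 := by
      intro h0
      have h2 := hfg.self_of_nhds
      simp only [h0, pow_zero, one_smul] at h2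
      have : g z₀ = 0 := sub_self (f z₀)
      exact hc (h2 ▸ this)
    have hn1 : n ≠ 1 := by
      intro h1
      -- then deriv g z₀ = h z₀ ≠ 0, but deriv g z₀ = deriv f z₀ = 0
      have hder : HasDerivAt (fun z => (z - z₀) ^ n • h z) (h z₀) z₀ := by
        subst h1
        have h1' : HasDerivAt (fun z : ℂ => (z - z₀)) 1 z₀ :=
          (hasDerivAt_id z₀).sub_const z₀
        have h2' : HasDerivAt h (deriv h z₀) z₀ :=
          (hh.differentiableAt).hasDerivAt
        have := h1'.mul h2'
        simpa [Pi.mul_def] using this.congr_deriv (by ring)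
      have hgd : HasDerivAt g (h z₀) z₀ :=
        hder.congr_of_eventuallyEq (hfg.mono fun z hz => hz)
      have : deriv g z₀ = h z₀ := hgd.deriv
      have hdg : deriv g z₀ = 0 := by
        have : HasDerivAt g (deriv f z₀ - 0) z₀ := by
          have := (hf.differentiableAt.hasDerivAt).sub_const (f z₀)
          simpa only [hg_def, sub_zero] using this
        simpa [hd] using this.deriv
      exact hc (by rw [← this, hdg])
    have hn2 : 2 ≤ n := by omega
    have hnC : (n : ℂ) ≠ 0 := Nat.cast_ne_zero.mpr hn0
    set c : ℂ := h z₀ with hc_def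
    set d : ℂ := c ^ ((n : ℂ))⁻¹ with hd_def
    have hdn : d ^ n = c := Complex.cpow_nat_inv_pow c hn0
    have hd' : d ≠ 0 := by
      intro h0
      apply hc
      rw [← hdn, h0, zero_pow hn0]
    set q : ℂ → ℂ := fun z => d * Complex.exp ((n : ℂ)⁻¹ * Complex.log (h z * c⁻¹)) with hq_def
    set φ : ℂ → ℂ := fun z => (z - z₀) * q z with hφ_def
    -- eventual facts
    have hhc : ∀ᶠ z in 𝓝 z₀, h z ≠ 0 := hh.continuousAt.eventually_ne hc
    have hψcont : ContinuousAt (fun z => h z * c⁻¹) z₀ := hh.continuousAt.mul continuousAt_const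
    have hψ1 : h z₀ * c⁻¹ = 1 := mul_inv_cancel₀ hc
    have hslit : ∀ᶠ z in 𝓝 z₀, h z * c⁻¹ ∈ Complex.slitPlane := by
      apply hψcont.eventually_mem
      rw [hψ1]
      exact Complex.isOpen_slitPlane.mem_nhds Complex.one_mem_slitPlane
    have hana : ∀ᶠ z in 𝓝 z₀, AnalyticAt ℂ h z := hh.eventually_analyticAt
    have hφana : ∀ᶠ z in 𝓝 z₀, AnalyticAt ℂ φ z := by
      filter_upwards [hslit, hana] with z hsl hz
      have t1 : AnalyticAt ℂ (fun z => h z * c⁻¹) z := hz.mul analyticAt_const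
      have t2 := AnalyticAt.comp (f := fun w => h w * c⁻¹) (x := z) (analyticAt_clog hsl) t1
      have t3 := (analyticAt_const (v := ((n : ℂ))⁻¹)).mul t2
      have t4 := AnalyticAt.comp (f := fun w => ((n : ℂ))⁻¹ * Complex.log (h w * c⁻¹)) (x := z)
        analyticAt_cexp t3
      have t5 := (analyticAt_const (v := d)).mul t4
      exact (analyticAt_id.sub analyticAt_const).mul (t5 : AnalyticAt ℂ q z)
    have hφ₀ : AnalyticAt ℂ φ z₀ := hφana.self_of_nhds
    have hq₀ : q z₀ = d := by
      simp [hq_def, hψ1, Complex.log_one]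
    have hder : HasDerivAt φ d z₀ := by
      have h1 : HasDerivAt (fun z : ℂ => z - z₀) 1 z₀ := (hasDerivAt_id z₀).sub_const z₀
      have hqd : DifferentiableAt ℂ q z₀ := by
        have t1 : AnalyticAt ℂ (fun z => h z * c⁻¹) z₀ := hh.mul analyticAt_const
        have t2 := AnalyticAt.comp (f := fun w => h w * c⁻¹) (x := z₀)
          (analyticAt_clog (show h z₀ * c⁻¹ ∈ Complex.slitPlane by
            rw [hψ1]; exact Complex.one_mem_slitPlane)) t1
        have t3 := (analyticAt_const (v := ((n : ℂ))⁻¹)).mul t2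
        have t4 := AnalyticAt.comp (f := fun w => ((n : ℂ))⁻¹ * Complex.log (h w * c⁻¹)) (x := z₀)
          analyticAt_cexp t3
        have t5 := (analyticAt_const (v := d)).mul t4
        exact (t5 : AnalyticAt ℂ q z₀).differentiableAt
      have h2 : HasDerivAt q (deriv q z₀) z₀ := hqd.hasDerivAt
      have := h1.mul h2
      rw [hφ_def, ← hq₀]
      simpa [Pi.mul_def] using this
    have hstrict : HasStrictDerivAt φ d z₀ := by
      have h1 := hφ₀.hasStrictFDerivAt.hasStrictDerivAt
      have h2 : fderiv ℂ φ z₀ 1 = deriv φ z₀ := rfl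
      rw [h2, hder.deriv] at h1
      exact h1
    -- eventual power identity
    have hpow : ∀ᶠ z in 𝓝 z₀, f z - f z₀ = φ z ^ n := by
      filter_upwards [hfg, hhc] with z hz hz0
      have hψ0 : h z * c⁻¹ ≠ 0 := mul_ne_zero hz0 (inv_ne_zero hc)
      have hqn : q z ^ n = h z := by
        rw [hq_def]
        rw [mul_pow, hdn, ← Complex.exp_nat_mul, ← mul_assoc, mul_inv_cancel₀ hnC, one_mul,
          Complex.exp_log hψ0]
        field_simp
      calc f z - f z₀ = (z - z₀) ^ n • h z := hz
        _ = (z - z₀) ^ n * h z := rfl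
        _ = φ z ^ n := by rw [hφ_def]; rw [mul_pow, hqn]
    set e := (hstrict.hasStrictFDerivAt_equiv hd').toOpenPartialHomeomorph φ with he_def
    have hze : z₀ ∈ e.source := (hstrict.hasStrictFDerivAt_equiv hd').mem_toOpenPartialHomeomorph_source
    have ecoe : (e : ℂ → ℂ) = φ := (hstrict.hasStrictFDerivAt_equiv hd').toOpenPartialHomeomorph_coe
    have hNev : ∀ᶠ z in 𝓝 z₀, (f z - f z₀ = φ z ^ n) ∧ z ∈ V ∧ z ∈ e.source :=
      hpow.and ((hV.eventually_mem hz₀).and (e.open_source.eventually_mem hze))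
    obtain ⟨N, hNsub, hNo, hNz⟩ := _root_.eventually_nhds_iff.mp hNev
    have hNe : N ⊆ e.source := fun z hz => (hNsub z hz).2.2
    have hT : IsOpen (e '' N) := e.isOpen_image_of_subset_source hNo hNe
    have hφz₀ : φ z₀ = 0 := by simp [hφ_def]
    have h0T : (0 : ℂ) ∈ e '' N := ⟨z₀, hNz, by rw [ecoe, hφz₀]⟩
    set ζ : ℂ := Complex.exp (2 * Real.pi * Complex.I / n) with hζ_def
    have hζn : ζ ^ n = 1 := by
      rw [hζ_def, ← Complex.exp_nat_mul]
      have : (n : ℂ) * (2 * Real.pi * Complex.I / n) = 2 * Real.pi * Complex.I := by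
        field_simp
      rw [this, Complex.exp_two_pi_mul_I]
    have hζ1 : ζ ≠ 1 := by
      intro h1
      obtain ⟨k, hk⟩ := Complex.exp_eq_one_iff.mp h1
      have h2πI : (2 * Real.pi * Complex.I : ℂ) ≠ 0 := by
        simp [Complex.ext_iff, Real.pi_ne_zero, Complex.I_ne_zero]
      have hkn : (k : ℂ) * n = 1 := by
        have h3 : (2 * Real.pi * Complex.I : ℂ) = ((k : ℂ) * (2 * Real.pi * Complex.I)) * n := by
          rw [← hk]; field_simp
        have h4 : ((k : ℂ) * n) * (2 * Real.pi * Complex.I) = 1 * (2 * Real.pi * Complex.I) := by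
          linear_combination h3.symm
        exact mul_right_cancel₀ h2πI h4
      have : ((k * (n : ℤ) : ℤ) : ℂ) = ((1 : ℤ) : ℂ) := by push_cast; exact hkn
      have hkn' : k * (n : ℤ) = 1 := by exact_mod_cast this
      have hu : IsUnit ((n : ℤ)) := IsUnit.of_mul_eq_one _ (mul_comm k (n : ℤ) ▸ hkn')
      rcases Int.isUnit_iff.mp hu with h' | h' <;> omega
    set T' : Set ℂ := (e '' N) ∩ (fun w => ζ * w) ⁻¹' (e '' N) with hT'_def
    have hT'o : IsOpen T' := hT.inter (hT.preimage (continuous_const.mul continuous_id))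
    have h0T' : (0 : ℂ) ∈ T' := ⟨h0T, by simpa using h0T⟩
    have hwev0 : ∀ᶠ w in 𝓝 (0 : ℂ), w ∈ T' := hT'o.eventually_mem h0T'
    have hwev : ∀ᶠ w in 𝓝[≠] (0 : ℂ), w ∈ T' ∧ w ∈ ({0}ᶜ : Set ℂ) :=
      (hwev0.filter_mono nhdsWithin_le_nhds).and eventually_mem_nhdsWithin
    obtain ⟨w, hwT', hw0⟩ := hwev.exists
    have hw0' : w ≠ 0 := hw0
    obtain ⟨u, huN, hue⟩ := hwT'.1
    obtain ⟨v, hvN, hve⟩ := hwT'.2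
    rw [ecoe] at hue hve
    have hve' : φ v = ζ * w := hve
    have hfu : f u - f z₀ = w ^ n := by rw [← hue]; exact (hNsub u huN).1
    have hfv : f v - f z₀ = w ^ n := by
      rw [(hNsub v hvN).1, hve', mul_pow, hζn, one_mul]
    have hfuv : f u = f v := by
      have := hfu.trans hfv.symm
      linear_combination this
    have huv : u = v := hinj (hNsub u huN).2.1 (hNsub v hvN).2.1 hfuv
    apply hw0'
    have : w = ζ * w := by
      calc w = φ u := hue.symm
        _ = φ v := by rw [huv]
        _ = ζ * w := hve'
    have h2 : (ζ - 1) * w = 0 := by linear_combination this.symm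
    rcases mul_eq_zero.mp h2 with h3 | h3
    · exact absurd (by linear_combination h3) hζ1
    · exact h3


lemma exists_open_injOn_of_deriv_ne_zero' {f : ℂ → ℂ} {z : ℂ}
    (hf : AnalyticAt ℂ f z) (hd : deriv f z ≠ 0) :
    ∃ s : Set ℂ, IsOpen s ∧ z ∈ s ∧ Set.InjOn f s := by
  have hstrict : HasStrictDerivAt f (deriv f z) z := by
    have h1 := hf.hasStrictFDerivAt
    have h2 := h1.hasStrictDerivAt
    rw [show deriv f z = fderiv ℂ f z 1 from rfl]; exact h2
  set e := (hstrict.hasStrictFDerivAt_equiv hd).toOpenPartialHomeomorph f with he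
  refine ⟨e.source, e.open_source, ?_, ?_⟩
  · exact (hstrict.hasStrictFDerivAt_equiv hd).mem_toOpenPartialHomeomorph_source
  · have : (e : ℂ → ℂ) = f :=
      (hstrict.hasStrictFDerivAt_equiv hd).toOpenPartialHomeomorph_coe
    rw [← this]
    exact e.injOn

lemma exists_injOn_open_nbhd {U : Set ℂ} (hU : IsOpen U) {f : ℂ → ℂ}
    (hf : DifferentiableOn ℂ f U) {K : Set ℂ} (hK : IsCompact K) (hKU : K ⊆ U)
    (hcrit : ∀ z ∈ K, deriv f z ≠ 0) (hinj : Set.InjOn f K) :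
    ∃ V : Set ℂ, IsOpen V ∧ K ⊆ V ∧ V ⊆ U ∧ Set.InjOn f V := by
  have hA : AnalyticOnNhd ℂ f U := hf.analyticOnNhd hU
  -- for every pair in K × K, an open box with the "separating" property
  have key : ∀ p : K × K, ∃ s : Set (ℂ × ℂ), IsOpen s ∧ ((p.1 : ℂ), (p.2 : ℂ)) ∈ s ∧
      ∀ u v : ℂ, (u, v) ∈ s → f u = f v → u = v := by
    rintro ⟨⟨x, hx⟩, ⟨y, hy⟩⟩
    rcases eq_or_ne x y with rfl | hxy
    · obtain ⟨s, hso, hxs, hsinj⟩ :=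
        exists_open_injOn_of_deriv_ne_zero' (hA x (hKU hx)) (hcrit x hx)
      exact ⟨s ×ˢ s, hso.prod hso, ⟨hxs, hxs⟩, fun u v huv hfuv =>
        hsinj huv.1 huv.2 hfuv⟩
    · have hfxy : f x ≠ f y := fun hfe => hxy (hinj hx hy hfe)
      obtain ⟨O₁, O₂, hO₁, hO₂, hfx, hfy, hdis⟩ := t2_separation hfxy
      refine ⟨(U ∩ f ⁻¹' O₁) ×ˢ (U ∩ f ⁻¹' O₂),
        (hf.continuousOn.isOpen_inter_preimage hU hO₁).prod
          (hf.continuousOn.isOpen_inter_preimage hU hO₂),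
        ⟨⟨hKU hx, hfx⟩, ⟨hKU hy, hfy⟩⟩, fun u v huv hfuv => ?_⟩
      exact absurd hfuv (fun hfe =>
        (Set.disjoint_left.mp hdis huv.1.2) (hfe ▸ huv.2.2))
  choose c hco hcm hcP using key
  by_cases hKne : K.Nonempty
  · -- Lebesgue number lemma on the compact set K ×ˢ K
    have hKK : IsCompact (K ×ˢ K) := hK.prod hK
    have hcover : K ×ˢ K ⊆ ⋃ p : K × K, c p := by
      rintro ⟨x, y⟩ ⟨hx, hy⟩
      exact Set.mem_iUnion.mpr ⟨(⟨x, hx⟩, ⟨y, hy⟩), hcm _⟩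
    obtain ⟨δ, hδ, hball⟩ := lebesgue_number_lemma_of_metric hKK hco hcover
    refine ⟨U ∩ Metric.thickening δ K, hU.inter Metric.isOpen_thickening,
      fun z hz => ⟨hKU hz, Metric.self_subset_thickening hδ K hz⟩,
      Set.inter_subset_left, ?_⟩
    rintro u ⟨huU, huT⟩ v ⟨hvU, hvT⟩ hfuv
    obtain ⟨x, hx, hux⟩ := Metric.mem_thickening_iff.mp huT
    obtain ⟨y, hy, hvy⟩ := Metric.mem_thickening_iff.mp hvT
    obtain ⟨p, hp⟩ := hball (x, y) ⟨hx, hy⟩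
    have hmem : (u, v) ∈ Metric.ball ((x : ℂ), (y : ℂ)) δ := by
      rw [Metric.mem_ball, Prod.dist_eq]
      exact max_lt hux hvy
    exact hcP p u v (hp hmem) hfuv
  · exact ⟨∅, isOpen_empty, fun z hz => absurd ⟨z, hz⟩ hKne,
      Set.empty_subset U, Set.injOn_empty f⟩

/-- Let `f` be holomorphic on an open set `U ⊆ ℂ` and `K ⊆ U` compact. Then there is
no open set `V` with `K ⊆ V ⊆ U` on which `f` is injective if and only if either `f`
has a critical point on `K` (a point where the derivative vanishes) or the restriction
of `f` to `K` is not injective (or both). -/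
theorem no_injective_nbhd_iff_critical_or_not_injOn (U : Set ℂ) (hU : IsOpen U)
    (f : ℂ → ℂ) (hf : DifferentiableOn ℂ f U) (K : Set ℂ) (hK : IsCompact K)
    (hKU : K ⊆ U) :
    (¬ ∃ V : Set ℂ, IsOpen V ∧ K ⊆ V ∧ V ⊆ U ∧ Set.InjOn f V) ↔
      ((∃ z ∈ K, deriv f z = 0) ∨ ¬ Set.InjOn f K) := by
  constructor
  · intro hno
    by_contra hcon
    push_neg at hcon
    obtain ⟨hcrit, hinj⟩ := hcon
    exact hno (exists_injOn_open_nbhd hU hf hK hKU hcrit hinj)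
  · rintro (⟨z, hzK, hdz⟩ | hninj) ⟨V, hVo, hKV, hVU, hVinj⟩
    · exact not_injOn_of_deriv_eq_zero ((hf.analyticOnNhd hU) z (hKU hzK)) hdz hVo (hKV hzK) hVinj
    · exact hninj (hVinj.mono hKV)
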